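/- Suppose the family (π_t) is spreading, i.e. for all r, δ > 0 there exists R > 0 such that μ({t : ρ_Y(π_t(x)) < r}) < δ whenever ρ_X(x) > R. Then there exists a sequence (R_n)_{n∈ℕ} of positive real numbers with the following property: for every sequence (p_n)_{n∈ℕ} in X satisfying ρ_X(p_{n+1}) ≥ ρ_X(p_n) > R_n for all n, the set of parameters t ∈ P for which there exists some r > 0 with {n ∈ ℕ : ρ_Y(π_t(p_n)) ≤ r} infinite has μ-measure zero; in other words, for μ-almost every t the map π_t restricted to {p_n : n ∈ ℕ} is proper (preimages of compact subsets of Y are finite) and its image is a discrete subset of Y. -/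

import Mathlib

open MeasureTheory Filter
open scoped ENNReal

theorem stmt8 {X Y Ω : Type*} [TopologicalSpace X] [TopologicalSpace Y]
    [LocallyCompactSpace X] [LocallyCompactSpace Y] [T2Space X] [T2Space Y]
    [MeasurableSpace Y] [BorelSpace Y]
    [MeasurableSpace Ω] (μ : Measure Ω) [IsProbabilityMeasure μ]
    (ρX : X → ℝ) (ρY : Y → ℝ)
    (hρXc : Continuous ρX) (hρX0 : ∀ x, 0 ≤ ρX x)
    (hρXe : ∀ c : ℝ, 0 < c → IsCompact {x : X | ρX x ≤ c})
    (hρYc : Continuous ρY) (hρY0 : ∀ y, 0 ≤ ρY y)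
    (hρYe : ∀ c : ℝ, 0 < c → IsCompact {y : Y | ρY y ≤ c})
    (π : Ω → X → Y) (hcont : ∀ t, Continuous (π t))
    (hmeas : ∀ x, Measurable fun t => π t x)
    (hspread : ∀ r : ℝ, 0 < r → ∀ δ : ℝ, 0 < δ → ∃ R : ℝ, 0 < R ∧
        ∀ x : X, R < ρX x → μ {t : Ω | ρY (π t x) < r} < ENNReal.ofReal δ) :
    ∃ R : ℕ → ℝ, (∀ n, 0 < R n) ∧
      ∀ p : ℕ → X,
        (∀ n, ρX (p n) ≤ ρX (p (n + 1)) ∧ R n < ρX (p n)) →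
        μ {t : Ω | ∃ r : ℝ, 0 < r ∧ {n : ℕ | ρY (π t (p n)) ≤ r}.Infinite} = 0 := by
  -- for each m n, pick a radius from the spreading hypothesis
  have hbase : ∀ m n : ℕ, ∃ R : ℝ, 0 < R ∧
      ∀ x : X, R < ρX x → μ {t : Ω | ρY (π t x) < (m : ℝ) + 1} < ENNReal.ofReal ((1/2 : ℝ) ^ n) := by
    intro m n
    exact hspread ((m : ℝ) + 1) (by positivity) ((1/2 : ℝ) ^ n) (by positivity)
  choose g hgpos hg using hbase
  refine ⟨fun n => 1 + (Finset.range (n + 1)).sup' ⟨0, Finset.mem_range.2 (Nat.succ_pos n)⟩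
      (fun m => g m n), fun n => ?_, ?_⟩
  · have : 0 < (Finset.range (n + 1)).sup' ⟨0, Finset.mem_range.2 (Nat.succ_pos n)⟩
        (fun m => g m n) :=
      lt_of_lt_of_le (hgpos 0 n)
        (Finset.le_sup' (fun m => g m n) (Finset.mem_range.2 (Nat.succ_pos n)))
    dsimp only
    linarith
  · intro p hp
    set A : ℕ → ℕ → Set Ω := fun m n => {t : Ω | ρY (π t (p n)) < (m : ℝ) + 1} with hA
    have hgle : ∀ m n : ℕ, m ≤ n → μ (A m n) < ENNReal.ofReal ((1/2 : ℝ) ^ n) := by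
      intro m n hmn
      apply hg m n
      have h1 : g m n ≤ (Finset.range (n + 1)).sup' ⟨0, Finset.mem_range.2 (Nat.succ_pos n)⟩
          (fun m => g m n) := Finset.le_sup' (fun m => g m n) (Finset.mem_range.2 (Nat.lt_succ_of_le hmn))
      have h2 := (hp n).2
      dsimp only at h2
      linarith
    have hsum : ∀ m : ℕ, (∑' n, μ (A m n)) ≠ ∞ := by
      intro m
      have hbound : ∀ n : ℕ, μ (A m n) ≤ 2 ^ m * (2⁻¹ : ℝ≥0∞) ^ n := by
        intro n
        rcases le_or_gt m n with hmn | hmn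
        · refine le_trans (hgle m n hmn).le ?_
          have : ENNReal.ofReal ((1/2 : ℝ) ^ n) = (2⁻¹ : ℝ≥0∞) ^ n := by
            rw [one_div, ENNReal.ofReal_pow (by norm_num)]
            congr 1
            rw [ENNReal.ofReal_inv_of_pos (by norm_num)]
            norm_num
          rw [this]
          exact le_mul_of_one_le_left zero_le (one_le_pow_of_one_le' (by norm_num) m)
        · calc μ (A m n) ≤ 1 := prob_le_one
            _ = 2 ^ n * (2⁻¹ : ℝ≥0∞) ^ n := by
                rw [← mul_pow, ENNReal.mul_inv_cancel (by norm_num) (by norm_num), one_pow]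
            _ ≤ 2 ^ m * (2⁻¹ : ℝ≥0∞) ^ n :=
                mul_le_mul_left (pow_le_pow_right₀ (by norm_num) hmn.le) _
      have : (∑' n, μ (A m n)) ≤ ∑' n, 2 ^ m * (2⁻¹ : ℝ≥0∞) ^ n :=
        ENNReal.tsum_le_tsum hbound
      refine ne_top_of_le_ne_top ?_ this
      rw [ENNReal.tsum_mul_left, ENNReal.tsum_geometric]
      refine ENNReal.mul_ne_top (by simp) (ENNReal.inv_ne_top.2 ?_)
      rw [ENNReal.one_sub_inv_two]; simp
    have hnull : μ (⋃ m : ℕ, limsup (A m) atTop) = 0 :=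
      measure_iUnion_null fun m => measure_limsup_atTop_eq_zero (hsum m)
    refine measure_mono_null ?_ hnull
    rintro t ⟨r, hr, hinf⟩
    refine Set.mem_iUnion.2 ⟨⌈r⌉₊, ?_⟩
    rw [mem_limsup_iff_frequently_mem, Nat.frequently_atTop_iff_infinite]
    refine hinf.mono fun n hn => ?_
    simp only [Set.mem_setOf_eq, hA] at hn ⊢
    calc ρY (π t (p n)) ≤ r := hn
      _ ≤ ⌈r⌉₊ := Nat.le_ceil r
      _ < ⌈r⌉₊ + 1 := by linarith
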